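/- A 2-PF solution always exists: for every n ≥ 1 and every profile x ∈ [0,1]^n there exists a facility location y ∈ [0,1] such that for every nonempty set S of agents, letting r = max_{i ∈ S} x_i − min_{i ∈ S} x_i, we have |y − x_i| ≥ |S|/(2n) − r for every i ∈ S. -/

import Mathlib

open Finset MeasureTheory ENNReal

private lemma min_subcover {ι : Type*} [DecidableEq ι] (K : Set ℝ) (U : ι → Set ℝ) :
    ∀ (F : Finset ι), (K ⊆ ⋃ i ∈ F, U i) →
    ∃ F' ⊆ F, (K ⊆ ⋃ i ∈ F', U i) ∧ ∀ i ∈ F', ¬ (K ⊆ ⋃ j ∈ F'.erase i, U j) := by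
  intro F
  induction F using Finset.strongInduction with
  | _ F ih =>
    intro hcov
    by_cases h : ∀ i ∈ F, ¬ (K ⊆ ⋃ j ∈ F.erase i, U j)
    · exact ⟨F, subset_rfl, hcov, h⟩
    · push_neg at h
      obtain ⟨i, hi, hcov'⟩ := h
      obtain ⟨F', hsub, h1, h2⟩ := ih (F.erase i) (Finset.erase_ssubset hi) hcov'
      exact ⟨F', hsub.trans (Finset.erase_subset _ _), h1, h2⟩

private lemma mult_le_two {ι : Type*} [DecidableEq ι] (K : Set ℝ) (l r : ι → ℝ) (F' : Finset ι)
    (hcov : K ⊆ ⋃ i ∈ F', Set.Ioo (l i) (r i))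
    (hmin : ∀ i ∈ F', ¬ (K ⊆ ⋃ j ∈ F'.erase i, Set.Ioo (l j) (r j))) (z : ℝ) :
    (F'.filter (fun c => z ∈ Set.Ioo (l c) (r c))).card ≤ 2 := by
  by_contra hc
  push_neg at hc
  set Fz := F'.filter (fun c => z ∈ Set.Ioo (l c) (r c)) with hFz
  have hne : Fz.Nonempty := Finset.card_pos.mp (by omega)
  obtain ⟨A, hA, hAmin⟩ := Finset.exists_min_image Fz l hne
  obtain ⟨B, hB, hBmax⟩ := Finset.exists_max_image Fz r hne
  have e1 : Fz.card - 1 ≤ (Fz.erase A).card := Finset.pred_card_le_card_erase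
  have e2 : (Fz.erase A).card - 1 ≤ ((Fz.erase A).erase B).card := Finset.pred_card_le_card_erase
  obtain ⟨C, hC⟩ := Finset.card_pos.mp (show 0 < ((Fz.erase A).erase B).card by omega)
  have hCB : C ≠ B := (Finset.mem_erase.mp hC).1
  have hCA : C ≠ A := (Finset.mem_erase.mp (Finset.mem_erase.mp hC).2).1
  have hCFz : C ∈ Fz := (Finset.mem_erase.mp (Finset.mem_erase.mp hC).2).2
  have hCF' : C ∈ F' := (Finset.mem_filter.mp hCFz).1
  apply hmin C hCF'
  intro w hw
  obtain ⟨s, hs⟩ := Set.mem_iUnion.mp (hcov hw)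
  simp only [Set.mem_iUnion, exists_prop] at hs
  obtain ⟨hsF, hws⟩ := hs
  by_cases hsC : s = C
  · subst hsC
    have hzA := (Finset.mem_filter.mp hA).2
    have hzB := (Finset.mem_filter.mp hB).2
    have hAF' : A ∈ F' := (Finset.mem_filter.mp hA).1
    have hBF' : B ∈ F' := (Finset.mem_filter.mp hB).1
    simp only [Set.mem_Ioo] at hzA hzB hws
    rcases le_or_gt w z with hwz | hwz
    · refine Set.mem_biUnion (Finset.mem_erase.mpr ⟨hCA.symm, hAF'⟩) ?_
      exact Set.mem_Ioo.mpr ⟨lt_of_le_of_lt (hAmin _ hCFz) hws.1, lt_of_le_of_lt hwz hzA.2⟩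
    · refine Set.mem_biUnion (Finset.mem_erase.mpr ⟨hCB.symm, hBF'⟩) ?_
      exact Set.mem_Ioo.mpr ⟨lt_trans hzB.1 hwz, lt_of_lt_of_le hws.2 (hBmax _ hCFz)⟩
  · exact Set.mem_biUnion (Finset.mem_erase.mpr ⟨hsC, hsF⟩) hws

private lemma no_dense_cover (n : ℕ) (hn : 1 ≤ n) (x : Fin n → ℝ) {ι : Type*} [DecidableEq ι]
    (l r : ι → ℝ) (hlr : ∀ i, l i < r i)
    (hdense : ∀ i, 2*(n:ℝ)*(r i - l i) <
      ((Finset.univ.filter (fun j => x j ∈ Set.Ioo (l i) (r i))).card : ℝ))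
    (F : Finset ι) (hcov : Set.Icc (0:ℝ) 1 ⊆ ⋃ i ∈ F, Set.Ioo (l i) (r i)) : False := by
  obtain ⟨F', _, hcov', hmin⟩ := min_subcover (Set.Icc (0:ℝ) 1) _ F hcov
  have hmult := mult_le_two (Set.Icc (0:ℝ) 1) l r F' hcov' hmin
  -- F' nonempty
  have hne : F'.Nonempty := by
    have h0 : (0:ℝ) ∈ Set.Icc (0:ℝ) 1 := by constructor <;> norm_num
    obtain ⟨s, hs⟩ := Set.mem_iUnion.mp (hcov' h0)
    simp only [Set.mem_iUnion, exists_prop] at hs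
    exact ⟨s, hs.1⟩
  -- total length ≥ 1
  have S1 : (1:ℝ) ≤ ∑ c ∈ F', (r c - l c) := by
    have h1 : (1:ℝ≥0∞) ≤ volume (⋃ i ∈ (F' : Set ι), Set.Ioo (l i) (r i)) := by
      have := measure_mono (μ := volume) hcov'
      rwa [Real.volume_Icc, show (1:ℝ) - 0 = 1 by ring, ENNReal.ofReal_one] at this
    have h2 : volume (⋃ i ∈ (F' : Set ι), Set.Ioo (l i) (r i)) ≤
        ∑ c ∈ F', volume (Set.Ioo (l c) (r c)) := measure_biUnion_finset_le _ _
    have h3 : ∑ c ∈ F', volume (Set.Ioo (l c) (r c)) =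
        ENNReal.ofReal (∑ c ∈ F', (r c - l c)) := by
      rw [ENNReal.ofReal_sum_of_nonneg (fun c _ => le_of_lt (sub_pos.mpr (hlr c)))]
      simp [Real.volume_Ioo]
    rw [h3] at h2
    exact ENNReal.one_le_ofReal.mp (le_trans h1 h2)
  -- total count ≤ 2n
  have S2 : ∑ c ∈ F', (Finset.univ.filter (fun j => x j ∈ Set.Ioo (l c) (r c))).card ≤ 2 * n := by
    have swap : ∑ c ∈ F', (Finset.univ.filter (fun j => x j ∈ Set.Ioo (l c) (r c))).card
        = ∑ j : Fin n, (F'.filter (fun c => x j ∈ Set.Ioo (l c) (r c))).card := by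
      simp only [Finset.card_filter]
      exact Finset.sum_comm
    rw [swap]
    calc ∑ j : Fin n, (F'.filter (fun c => x j ∈ Set.Ioo (l c) (r c))).card
        ≤ ∑ _j : Fin n, 2 := Finset.sum_le_sum (fun j _ => hmult (x j))
      _ = 2 * n := by simp [Finset.sum_const, mul_comm]
  have S2' : (∑ c ∈ F', ((Finset.univ.filter
      (fun j => x j ∈ Set.Ioo (l c) (r c))).card : ℝ)) ≤ 2 * n := by
    rw [← Nat.cast_sum]
    exact_mod_cast S2
  have S3 : ∑ c ∈ F', 2*(n:ℝ)*(r c - l c) <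
      ∑ c ∈ F', ((Finset.univ.filter (fun j => x j ∈ Set.Ioo (l c) (r c))).card : ℝ) :=
    Finset.sum_lt_sum_of_nonempty hne (fun c _ => hdense c)
  have S4 : 2*(n:ℝ)*1 ≤ ∑ c ∈ F', 2*(n:ℝ)*(r c - l c) := by
    rw [← Finset.mul_sum]
    have hnpos : (0:ℝ) < n := by exact_mod_cast hn
    nlinarith [S1]
  have hnpos : (0:ℝ) < n := by exact_mod_cast hn
  linarith

/-- A 2-PF solution always exists. -/
theorem two_PF_exists (n : ℕ) (hn : 1 ≤ n) (x : Fin n → ℝ)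
    (hx : ∀ i, x i ∈ Set.Icc (0:ℝ) 1) :
    ∃ y ∈ Set.Icc (0:ℝ) 1, ∀ (S : Finset (Fin n)) (hS : S.Nonempty), ∀ i ∈ S,
      (S.card : ℝ)/(2*n) - (S.sup' hS x - S.inf' hS x) ≤ |y - x i| := by
  classical
  have hnpos : (0:ℝ) < n := by exact_mod_cast hn
  -- Step 1: there is a point y such that every interval containing y has agent count ≤ 2n·length
  have key : ∃ y ∈ Set.Icc (0:ℝ) 1, ∀ a b : ℝ, a ≤ y → y ≤ b →
      ((Finset.univ.filter (fun i => x i ∈ Set.Icc a b)).card : ℝ) ≤ 2*n*(b-a) := by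
    by_contra hcon
    push_neg at hcon
    have hfat : ∀ y : (Set.Icc (0:ℝ) 1), ∃ p : ℝ × ℝ, p.1 < (y:ℝ) ∧ (y:ℝ) < p.2 ∧
        2*(n:ℝ)*(p.2 - p.1) <
          ((Finset.univ.filter (fun i => x i ∈ Set.Ioo p.1 p.2)).card : ℝ) := by
      rintro ⟨y, hy⟩
      obtain ⟨a, b, hay, hyb, hgt⟩ := hcon y hy
      set c := ((Finset.univ.filter (fun i => x i ∈ Set.Icc a b)).card : ℝ) with hc
      set ε := (c - 2*n*(b-a))/(8*n) with hε
      have hgt' : 2*(n:ℝ)*(b-a) < c := hgt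
      have hεpos : 0 < ε := by
        rw [hε]; apply div_pos (by linarith) (by linarith)
      refine ⟨(a - ε, b + ε), by dsimp; linarith, by dsimp; linarith, ?_⟩
      have hsub : (Finset.univ.filter (fun i => x i ∈ Set.Icc a b)).card ≤
          (Finset.univ.filter (fun i => x i ∈ Set.Ioo (a-ε) (b+ε))).card := by
        apply Finset.card_le_card
        apply Finset.monotone_filter_right
        intro i _ hi
        exact Set.mem_Ioo.mpr ⟨by linarith [hi.1], by linarith [hi.2]⟩
      have h8 : 8*(n:ℝ)*ε = c - 2*n*(b-a) := by
        rw [hε]; field_simp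
      have hcast : c ≤ ((Finset.univ.filter
          (fun i => x i ∈ Set.Ioo (a-ε) (b+ε))).card : ℝ) := by
        rw [hc]; exact_mod_cast hsub
      dsimp only
      linarith
    choose p h1 h2 h3 using hfat
    have hcover : Set.Icc (0:ℝ) 1 ⊆ ⋃ y : (Set.Icc (0:ℝ) 1), Set.Ioo (p y).1 (p y).2 :=
      fun z hz => Set.mem_iUnion.mpr ⟨⟨z, hz⟩, Set.mem_Ioo.mpr ⟨h1 ⟨z, hz⟩, h2 ⟨z, hz⟩⟩⟩
    obtain ⟨t, ht⟩ := isCompact_Icc.elim_finite_subcover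
      (fun y : (Set.Icc (0:ℝ) 1) => Set.Ioo (p y).1 (p y).2) (fun _ => isOpen_Ioo) hcover
    exact no_dense_cover n hn x (fun y => (p y).1) (fun y => (p y).2)
      (fun y => lt_trans (h1 y) (h2 y)) h3 t ht
  -- Step 2: such a point satisfies 2-PF
  obtain ⟨y, hy, hP⟩ := key
  refine ⟨y, hy, ?_⟩
  intro S hS i hi
  set m := S.inf' hS x with hm
  set M := S.sup' hS x with hM
  have hmi : m ≤ x i := Finset.inf'_le x hi
  have hiM : x i ≤ M := Finset.le_sup' x hi
  have hmM : m ≤ M := le_trans hmi hiM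
  have hcard : ∀ a b : ℝ, (∀ j ∈ S, x j ∈ Set.Icc a b) →
      (S.card : ℝ) ≤ ((Finset.univ.filter (fun j => x j ∈ Set.Icc a b)).card : ℝ) := by
    intro a b hab
    have : S ⊆ Finset.univ.filter (fun j => x j ∈ Set.Icc a b) := by
      intro j hj
      exact Finset.mem_filter.mpr ⟨Finset.mem_univ j, hab j hj⟩
    exact_mod_cast Finset.card_le_card this
  rcases lt_or_ge y m with hym | hym
  · -- y < m
    have hk : (S.card : ℝ) ≤ 2*n*(M - y) := by
      refine le_trans (hcard y M (fun j hj => ⟨le_of_lt (lt_of_lt_of_le hym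
        (Finset.inf'_le x hj)), Finset.le_sup' x hj⟩)) (hP y M le_rfl (by linarith))
    have hdiv : (S.card : ℝ)/(2*n) ≤ M - y := by
      rw [div_le_iff₀ (by linarith : (0:ℝ) < 2*n)]; linarith
    have habs : |y - x i| = x i - y := by
      rw [abs_of_nonpos (by linarith : y - x i ≤ 0)]; ring
    rw [habs]; linarith
  rcases le_or_gt y M with hyM | hyM
  · -- m ≤ y ≤ M
    have hk : (S.card : ℝ) ≤ 2*n*(M - m) := by
      refine le_trans (hcard m M (fun j hj => ⟨Finset.inf'_le x hj, Finset.le_sup' x hj⟩))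
        (hP m M hym hyM)
    have : (S.card : ℝ)/(2*n) ≤ M - m := by
      rw [div_le_iff₀ (by linarith : (0:ℝ) < 2*n)]; linarith
    have := abs_nonneg (y - x i)
    linarith
  · -- M < y
    have hk : (S.card : ℝ) ≤ 2*n*(y - m) := by
      refine le_trans (hcard m y (fun j hj => ⟨Finset.inf'_le x hj,
        le_of_lt (lt_of_le_of_lt (Finset.le_sup' x hj) hyM)⟩)) (hP m y (by linarith) le_rfl)
    have hdiv : (S.card : ℝ)/(2*n) ≤ y - m := by
      rw [div_le_iff₀ (by linarith : (0:ℝ) < 2*n)]; linarith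
    have habs : |y - x i| = y - x i := abs_of_nonneg (by linarith)
    rw [habs]; linarith
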